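/- Let ℓ₁,…,ℓₙ be positive integers, ℓ = max_k ℓ_k, γ_k = ℓ/ℓ_k, ‖γ‖ = Σ_{k=1}^n γ_k, and ρ(x) = (Σ_{k=1}^n x_k^{2ℓ_k})^{1/(2ℓ)} for x ∈ ℝⁿ. Then for every real s: the integral ∫_{{x : ρ(x) ≤ 1}} ρ(x)^s dx is finite if and only if s > -‖γ‖; and in that case, for every t > 0, ∫_{{x : ρ(x) ≤ t}} ρ(x)^s dx = t^{s+‖γ‖} ∫_{{x : ρ(x) ≤ 1}} ρ(x)^s dx. -/

import Mathlib

open MeasureTheory Real Set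
open scoped ENNReal

set_option linter.unusedVariables false

noncomputable section

namespace Semielliptic

/-- `σ(x) = Σ_k x_k^{2ℓ_k}` -/
def sig {n : ℕ} (l : Fin n → ℕ) (x : Fin n → ℝ) : ℝ := ∑ k, x k ^ (2 * l k)

/-- `ℓ = max_k ℓ_k` -/
def lmax {n : ℕ} (l : Fin n → ℕ) : ℕ := Finset.univ.sup l

/-- the anisotropic length `ρ(x) = σ(x)^{1/(2ℓ)}` -/
def rho {n : ℕ} (l : Fin n → ℕ) (x : Fin n → ℝ) : ℝ :=
  sig l x ^ ((1 : ℝ) / (2 * (lmax l : ℝ)))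

/-- `γ_k = ℓ/ℓ_k` -/
def gam {n : ℕ} (l : Fin n → ℕ) (k : Fin n) : ℝ := (lmax l : ℝ) / (l k : ℝ)

/-- `‖γ‖ = Σ_k γ_k` -/
def gnorm {n : ℕ} (l : Fin n → ℕ) : ℝ := ∑ k, gam l k

/-- `α·γ = Σ_k α_k γ_k` -/
def dotg {n : ℕ} (l : Fin n → ℕ) (a : Fin n → ℕ) : ℝ := ∑ k, (a k : ℝ) * gam l k

/-- the partial derivative in the k-th coordinate direction -/
def pd {n : ℕ} {E : Type*} [NormedAddCommGroup E] [NormedSpace ℝ E] (k : Fin n)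
    (f : (Fin n → ℝ) → E) : (Fin n → ℝ) → E :=
  fun x => fderiv ℝ f x (Pi.single k 1)

/-- the multi-index partial derivative `∂^α` -/
def pdM {n : ℕ} {E : Type*} [NormedAddCommGroup E] [NormedSpace ℝ E] (a : Fin n → ℕ)
    (f : (Fin n → ℝ) → E) : (Fin n → ℝ) → E :=
  Fin.foldr n (fun k g => (pd k)^[a k] g) f

/-- the symbol `L(x) = Σ_{α·γ=ℓ} A_α (ix)^α` -/
def symb {n m : ℕ} {ι : Type} [Fintype ι] (l : Fin n → ℕ)
    (A : ι → Matrix (Fin m) (Fin m) ℂ) (mi : ι → Fin n → ℕ)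
    (x : Fin n → ℝ) : Matrix (Fin m) (Fin m) ℂ :=
  ∑ i, (∏ k, (Complex.I * (x k : ℂ)) ^ (mi i k)) • A i

/-- the Frobenius (Hilbert–Schmidt) norm of a matrix -/
def fro {m : ℕ} (M : Matrix (Fin m) (Fin m) ℂ) : ℝ :=
  Real.sqrt (∑ i, ∑ j, ‖M i j‖ ^ 2)

/-- the integrand `e^{ix·z}(iz)^β σ(z) e^{-tσ(z)} L(z)⁻¹` -/
def jker {n m : ℕ} {ι : Type} [Fintype ι] (l : Fin n → ℕ)
    (A : ι → Matrix (Fin m) (Fin m) ℂ) (mi : ι → Fin n → ℕ)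
    (b : Fin n → ℕ) (x : Fin n → ℝ) (t : ℝ) (z : Fin n → ℝ) : Matrix (Fin m) (Fin m) ℂ :=
  (Complex.exp (Complex.I * ((∑ k, x k * z k : ℝ) : ℂ)) *
      (∏ k, (Complex.I * (z k : ℂ)) ^ (b k)) *
      ((sig l z : ℝ) : ℂ) * ((Real.exp (-(t * sig l z)) : ℝ) : ℂ)) • (symb l A mi z)⁻¹

/-- `J_β(x,t) = ∫_{ℝⁿ} e^{ix·z}(iz)^β σ(z) e^{-tσ(z)} L(z)⁻¹ dz`, computed entrywise -/
def Jmat {n m : ℕ} {ι : Type} [Fintype ι] (l : Fin n → ℕ)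
    (A : ι → Matrix (Fin m) (Fin m) ℂ) (mi : ι → Fin n → ℕ)
    (b : Fin n → ℕ) (x : Fin n → ℝ) (t : ℝ) : Matrix (Fin m) (Fin m) ℂ :=
  Matrix.of fun i j => ∫ z : Fin n → ℝ, jker l A mi b x t z i j

/-- `F_β(x) = (2π)^{-n} ∫_0^∞ J_β(x,t) dt`, computed entrywise -/
def Fmat {n m : ℕ} {ι : Type} [Fintype ι] (l : Fin n → ℕ)
    (A : ι → Matrix (Fin m) (Fin m) ℂ) (mi : ι → Fin n → ℕ)
    (b : Fin n → ℕ) (x : Fin n → ℝ) : Matrix (Fin m) (Fin m) ℂ :=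
  Matrix.of fun i j =>
    ((((2 * Real.pi) ^ n)⁻¹ : ℝ) : ℂ) * ∫ t in Ioi (0 : ℝ), Jmat l A mi b x t i j

/-- `v` is the weak derivative `∂^α u`: tested against scalar test functions. -/
def IsWeakDeriv {n m : ℕ} (a : Fin n → ℕ) (u v : (Fin n → ℝ) → Fin m → ℂ) : Prop :=
  ∀ φ : (Fin n → ℝ) → ℝ, ContDiff ℝ (⊤ : ℕ∞) φ → HasCompactSupport φ →
    ∫ x : Fin n → ℝ, pdM a φ x • u x
      = ((-1 : ℝ) ^ (∑ k, a k)) • ∫ x : Fin n → ℝ, φ x • v x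

open Classical in
/-- the (finite) set of multi-indices with `α·γ ≤ r` -/
def idxSet {n : ℕ} (l : Fin n → ℕ) (r : ℝ) : Finset (Fin n → ℕ) :=
  (Finset.image (fun f : Fin n → Fin (⌈r⌉₊ + 1) => fun k => (f k : ℕ)) Finset.univ).filter
    (fun a => dotg l a ≤ r)

/-- `𝓛u = Σ_{α·γ=ℓ} A_α ∂^α u`, computed from the given family of (weak) derivatives of `u` -/
def Lop {n m : ℕ} {ι : Type} [Fintype ι] (A : ι → Matrix (Fin m) (Fin m) ℂ)
    (mi : ι → Fin n → ℕ) (du : (Fin n → ℕ) → (Fin n → ℝ) → Fin m → ℂ)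
    (x : Fin n → ℝ) : Fin m → ℂ :=
  ∑ i, (A i).mulVec (du (mi i) x)

/-- `𝓛φ` for smooth `φ` (classical derivatives) -/
def LopC {n m : ℕ} {ι : Type} [Fintype ι] (A : ι → Matrix (Fin m) (Fin m) ℂ)
    (mi : ι → Fin n → ℕ) (φ : (Fin n → ℝ) → Fin m → ℂ) (x : Fin n → ℝ) : Fin m → ℂ :=
  ∑ i, (A i).mulVec (pdM (mi i) φ x)

/-- the formal adjoint `𝓛*φ = Σ (-1)^{|α|} A_α* ∂^α φ` on smooth functions -/
def LopAdj {n m : ℕ} {ι : Type} [Fintype ι] (A : ι → Matrix (Fin m) (Fin m) ℂ)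
    (mi : ι → Fin n → ℕ) (φ : (Fin n → ℝ) → Fin m → ℂ) (x : Fin n → ℝ) : Fin m → ℂ :=
  ∑ i, ((-1 : ℂ) ^ (∑ k, mi i k)) • (A i).conjTranspose.mulVec (pdM (mi i) φ x)

/-- the pairing `u·v = v* u` in `ℂ^m` -/
def pairc {m : ℕ} (u v : Fin m → ℂ) : ℂ := ∑ j, u j * (starRingEnd ℂ) (v j)

section Aux

variable {n : ℕ} {l : Fin n → ℕ}

lemma sig_nonneg (l : Fin n → ℕ) (x : Fin n → ℝ) : 0 ≤ sig l x :=
  Finset.sum_nonneg fun k _ => (even_two_mul (l k)).pow_nonneg _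

lemma rho_nonneg (l : Fin n → ℕ) (x : Fin n → ℝ) : 0 ≤ rho l x :=
  Real.rpow_nonneg (sig_nonneg l x) _

lemma continuous_sig (l : Fin n → ℕ) : Continuous (sig l) := by
  unfold sig; fun_prop

lemma continuous_rho (l : Fin n → ℕ) : Continuous (rho l) := by
  unfold rho
  exact (continuous_sig l).rpow_const (fun x => Or.inr (by positivity))

lemma lmax_pos (hn : 0 < n) (hl : ∀ k, 0 < l k) : 0 < lmax l := by
  obtain ⟨k⟩ : Nonempty (Fin n) := ⟨⟨0, hn⟩⟩
  exact lt_of_lt_of_le (hl k) (Finset.le_sup (Finset.mem_univ k))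

lemma gam_pos (hl : ∀ k, 0 < l k) (k : Fin n) : 0 < gam l k := by
  have h1 : 0 < l k := hl k
  have h2 : (l k : ℕ) ≤ lmax l := Finset.le_sup (Finset.mem_univ k)
  exact div_pos (by exact_mod_cast lt_of_lt_of_le h1 h2) (by exact_mod_cast h1)

lemma gnorm_pos (hn : 0 < n) (hl : ∀ k, 0 < l k) : 0 < gnorm l := by
  have ⟨k⟩ : Nonempty (Fin n) := ⟨⟨0, hn⟩⟩
  exact Finset.sum_pos (fun k _ => gam_pos hl k) ⟨k, Finset.mem_univ k⟩

/-- the dilation as a linear map -/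
def dil (l : Fin n → ℕ) (t : ℝ) : (Fin n → ℝ) →ₗ[ℝ] (Fin n → ℝ) :=
  Matrix.toLin' (Matrix.diagonal (fun k => t ^ gam l k))

lemma dil_apply (t : ℝ) (x : Fin n → ℝ) : dil l t x = fun k => t ^ gam l k * x k := by
  ext k; simp [dil, Matrix.toLin'_apply, Matrix.mulVec_diagonal]

lemma dil_det (hn : 0 < n) (hl : ∀ k, 0 < l k) {t : ℝ} (ht : 0 < t) :
    LinearMap.det (dil l t) = t ^ gnorm l := by
  rw [dil, LinearMap.det_toLin', Matrix.det_diagonal]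
  rw [Real.rpow_def_of_pos ht, gnorm, mul_comm, Finset.sum_mul, Real.exp_sum]
  exact Finset.prod_congr rfl fun k _ => by rw [Real.rpow_def_of_pos ht, mul_comm]

lemma sig_dil (hl : ∀ k, 0 < l k) {t : ℝ} (ht : 0 < t) (x : Fin n → ℝ) :
    sig l (dil l t x) = t ^ (2 * (lmax l : ℝ)) * sig l x := by
  rw [dil_apply, sig, sig, Finset.mul_sum]
  refine Finset.sum_congr rfl fun k _ => ?_
  rw [mul_pow, ← Real.rpow_natCast (t ^ gam l k) (2 * l k), ← Real.rpow_mul ht.le]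
  congr 2
  have h : (l k : ℝ) ≠ 0 := by exact_mod_cast (hl k).ne'
  rw [gam]; push_cast; field_simp

lemma rho_dil (hn : 0 < n) (hl : ∀ k, 0 < l k) {t : ℝ} (ht : 0 < t) (x : Fin n → ℝ) :
    rho l (dil l t x) = t * rho l x := by
  have hL : (0:ℝ) < 2 * (lmax l : ℝ) := by
    have := lmax_pos hn hl; positivity
  rw [rho, rho, sig_dil hl ht, Real.mul_rpow (by positivity) (sig_nonneg l x),
    ← Real.rpow_mul ht.le, mul_one_div, div_self hL.ne', Real.rpow_one]

lemma dil_dil_inv (hl : ∀ k, 0 < l k) {t : ℝ} (ht : 0 < t) (x : Fin n → ℝ) :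
    dil l t (dil l t⁻¹ x) = x := by
  ext k
  rw [dil_apply, dil_apply]
  simp only []
  rw [← mul_assoc, ← Real.mul_rpow ht.le (by positivity), mul_inv_cancel₀ ht.ne',
    Real.one_rpow, one_mul]

lemma image_dil (hn : 0 < n) (hl : ∀ k, 0 < l k) {t : ℝ} (ht : 0 < t) :
    (dil l t) '' {x | rho l x ≤ 1} = {x | rho l x ≤ t} := by
  ext x
  constructor
  · rintro ⟨y, hy, rfl⟩
    simp only [mem_setOf_eq] at hy ⊢
    rw [rho_dil hn hl ht]
    calc t * rho l y ≤ t * 1 := by nlinarith [rho_nonneg l y]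
      _ = t := mul_one t
  · intro hx
    refine ⟨dil l t⁻¹ x, ?_, dil_dil_inv hl ht x⟩
    simp only [mem_setOf_eq]
    rw [rho_dil hn hl (inv_pos.mpr ht)]
    rw [inv_mul_le_iff₀ ht, mul_one]
    exact hx

lemma measurableSet_rho_le (l : Fin n → ℕ) (t : ℝ) : MeasurableSet {x | rho l x ≤ t} :=
  measurableSet_le (continuous_rho l).measurable measurable_const

/-- Part 2: the scaling identity, no integrability needed. -/
lemma scaling (hn : 0 < n) (hl : ∀ k, 0 < l k) (s : ℝ) {t : ℝ} (ht : 0 < t) :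
    ∫ x in {x : Fin n → ℝ | rho l x ≤ t}, rho l x ^ s
      = t ^ (s + gnorm l) * ∫ x in {x : Fin n → ℝ | rho l x ≤ 1}, rho l x ^ s := by
  have hdet : |LinearMap.det (dil l t)| = t ^ gnorm l := by
    rw [dil_det hn hl ht, abs_of_pos (Real.rpow_pos_of_pos ht _)]
  have hinv : ∀ x, dil l t⁻¹ (dil l t x) = x := by
    intro x
    have := dil_dil_inv hl (inv_pos.mpr ht) x
    rwa [inv_inv] at this
  have hinj : Set.InjOn (dil l t) {x | rho l x ≤ 1} := by
    intro a _ b _ hab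
    have := congrArg (dil l t⁻¹) hab
    rwa [hinv, hinv] at this
  have hder : ∀ x ∈ {x : Fin n → ℝ | rho l x ≤ 1},
      HasFDerivWithinAt (dil l t) (dil l t).toContinuousLinearMap {x | rho l x ≤ 1} x := by
    intro x _
    exact ((dil l t).toContinuousLinearMap.hasFDerivAt.congr_of_eventuallyEq
      (Filter.Eventually.of_forall fun y => by
        simp [LinearMap.coe_toContinuousLinearMap])).hasFDerivWithinAt
  rw [← image_dil hn hl ht,
    integral_image_eq_integral_abs_det_fderiv_smul volume (measurableSet_rho_le l 1)
      hder hinj]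
  have hdet' : |ContinuousLinearMap.det (dil l t).toContinuousLinearMap| = t ^ gnorm l := hdet
  calc ∫ x in {x : Fin n → ℝ | rho l x ≤ 1},
        |ContinuousLinearMap.det (dil l t).toContinuousLinearMap| • rho l (dil l t x) ^ s
      = ∫ x in {x : Fin n → ℝ | rho l x ≤ 1}, (t ^ gnorm l * t ^ s) * rho l x ^ s := by
        refine integral_congr_ae (Filter.Eventually.of_forall fun x => ?_)
        simp only [hdet', smul_eq_mul, rho_dil hn hl ht]
        rw [Real.mul_rpow ht.le (rho_nonneg l x)]
        ring
    _ = t ^ (s + gnorm l) * ∫ x in {x : Fin n → ℝ | rho l x ≤ 1}, rho l x ^ s := by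
        rw [integral_const_mul, Real.rpow_add ht]; ring


lemma measure_rho_le (hn : 0 < n) (hl : ∀ k, 0 < l k) {t : ℝ} (ht : 0 < t) :
    volume {x | rho l x ≤ t}
      = ENNReal.ofReal (t ^ gnorm l) * volume {x | rho l x ≤ 1} := by
  rw [← image_dil hn hl ht, Measure.addHaar_image_linearMap, dil_det hn hl ht,
    abs_of_pos (Real.rpow_pos_of_pos ht _)]

lemma c_lt_top (hn : 0 < n) (hl : ∀ k, 0 < l k) :
    volume {x : Fin n → ℝ | rho l x ≤ 1} < ⊤ := by
  have hsub : {x : Fin n → ℝ | rho l x ≤ 1} ⊆ Set.pi univ (fun _ : Fin n => Icc (-1:ℝ) 1) := by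
    intro x hx k _
    have hσ : sig l x ≤ 1 := by
      by_contra h
      push_neg at h
      have he : 0 < (1:ℝ)/(2*(lmax l:ℝ)) := by
        have := lmax_pos hn hl; positivity
      have h1 : 1 < rho l x :=
        (Real.one_lt_rpow_iff_of_pos (lt_trans one_pos h)).mpr (Or.inl ⟨h, he⟩)
      exact absurd hx (by simp only [mem_setOf_eq]; linarith)
    have hterm : x k ^ (2 * l k) ≤ 1 :=
      le_trans (Finset.single_le_sum (f := fun i => x i ^ (2 * l i))
        (fun i _ => (even_two_mul (l i)).pow_nonneg _) (Finset.mem_univ k)) hσ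
    have h1 : |x k| ^ (2 * l k) ≤ 1 := by
      rw [← abs_pow]
      rwa [abs_of_nonneg ((even_two_mul (l k)).pow_nonneg _)]
    have h2 : |x k| ≤ 1 :=
      (pow_le_one_iff_of_nonneg (abs_nonneg _)
        (Nat.mul_ne_zero two_ne_zero (hl k).ne')).mp h1
    simpa [mem_Icc] using abs_le.mp h2
  exact lt_of_le_of_lt (measure_mono hsub)
    ((isCompact_univ_pi fun _ => isCompact_Icc).measure_lt_top)

lemma c_pos (hn : 0 < n) (hl : ∀ k, 0 < l k) :
    0 < volume {x : Fin n → ℝ | rho l x ≤ 1} := by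
  have hU : IsOpen {x : Fin n → ℝ | sig l x < 1} :=
    isOpen_lt (continuous_sig l) continuous_const
  have hσ0 : sig l (0 : Fin n → ℝ) = 0 :=
    Finset.sum_eq_zero fun k _ => zero_pow (Nat.mul_ne_zero two_ne_zero (hl k).ne')
  have h0 : (0 : Fin n → ℝ) ∈ {x : Fin n → ℝ | sig l x < 1} := by
    simp [mem_setOf_eq, hσ0]
  have hsub : {x : Fin n → ℝ | sig l x < 1} ⊆ {x : Fin n → ℝ | rho l x ≤ 1} := by
    intro x hx
    exact Real.rpow_le_one (sig_nonneg l x) (le_of_lt hx) (by positivity)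
  exact lt_of_lt_of_le (hU.measure_pos volume ⟨0, h0⟩) (measure_mono hsub)

lemma rho_eq_zero_imp (hl : ∀ k, 0 < l k) {x : Fin n → ℝ} (hx : rho l x = 0) : x = 0 := by
  have hσ : sig l x = 0 := by
    rcases eq_or_lt_of_le (sig_nonneg l x) with h | h
    · exact h.symm
    · exact absurd hx (Real.rpow_pos_of_pos h _).ne'
  funext k
  have := (Finset.sum_eq_zero_iff_of_nonneg
    (fun i _ => (even_two_mul (l i)).pow_nonneg (x i))).mp hσ k (Finset.mem_univ k)
  exact pow_eq_zero_iff (Nat.mul_ne_zero two_ne_zero (hl k).ne') |>.mp this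

lemma volume_zero_singleton (hn : 0 < n) : volume ({0} : Set (Fin n → ℝ)) = 0 := by
  have h : ({0} : Set (Fin n → ℝ)) = Set.pi univ (fun _ => ({0} : Set ℝ)) := by
    ext y
    simp [funext_iff, Set.mem_pi, funext_iff]
  rw [h, volume_pi_pi]
  simp only [Real.volume_singleton, Finset.prod_const]
  rw [zero_pow]
  simp [hn.ne']

lemma lint_decomp (hn : 0 < n) (hl : ∀ k, 0 < l k) (f : (Fin n → ℝ) → ℝ≥0∞) :
    ∫⁻ x in {x : Fin n → ℝ | rho l x ≤ 1}, f x
      = ∑' j : ℕ, ∫⁻ x in rho l ⁻¹' Ioc ((2⁻¹:ℝ)^(j+1)) ((2⁻¹:ℝ)^j), f x := by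
  have hae : {x : Fin n → ℝ | rho l x ≤ 1} =ᵐ[volume] rho l ⁻¹' Ioc 0 1 := by
    rw [ae_eq_set]
    constructor
    · refine measure_mono_null ?_ (volume_zero_singleton hn)
      rintro x ⟨hx1, hx2⟩
      simp only [mem_preimage, mem_Ioc, not_and, not_le] at hx2
      have h0 : rho l x = 0 := by
        rcases eq_or_lt_of_le (rho_nonneg l x) with h | h
        · exact h.symm
        · exact absurd hx1 (by simpa using (hx2 h).not_ge)
      exact rho_eq_zero_imp hl h0
    · have : rho l ⁻¹' Ioc 0 1 ⊆ {x : Fin n → ℝ | rho l x ≤ 1} := fun x hx => hx.2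
      rw [diff_eq_empty.mpr this, measure_empty]
  have hUn : (⋃ j : ℕ, Ioc ((2⁻¹:ℝ)^(j+1)) ((2⁻¹:ℝ)^j)) = Ioc (0:ℝ) 1 := by
    ext r
    simp only [mem_iUnion, mem_Ioc]
    constructor
    · rintro ⟨j, h1, h2⟩
      refine ⟨lt_of_le_of_lt (by positivity) h1, h2.trans ?_⟩
      exact pow_le_one₀ (by norm_num) (by norm_num)
    · rintro ⟨h0, h1⟩
      have hex : ∃ j : ℕ, (2⁻¹:ℝ)^(j+1) < r := by
        obtain ⟨m, hm⟩ := exists_pow_lt_of_lt_one h0 (by norm_num : (2⁻¹:ℝ) < 1)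
        exact ⟨m, lt_of_le_of_lt
          (pow_le_pow_of_le_one (by norm_num) (by norm_num) (Nat.le_succ m)) hm⟩
      classical
      refine ⟨Nat.find hex, Nat.find_spec hex, ?_⟩
      rcases Nat.eq_zero_or_pos (Nat.find hex) with h | h
      · rw [h]; simpa using h1
      · have hmin := Nat.find_min hex (Nat.sub_lt h one_pos)
        push_neg at hmin
        have heq : Nat.find hex - 1 + 1 = Nat.find hex := Nat.succ_pred_eq_of_pos h
        rwa [heq] at hmin
  have hdisj : Pairwise (Function.onFun Disjoint
      (fun j : ℕ => rho l ⁻¹' Ioc ((2⁻¹:ℝ)^(j+1)) ((2⁻¹:ℝ)^j))) := by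
    have key : ∀ i j : ℕ, i < j →
        Disjoint (Ioc ((2⁻¹:ℝ)^(i+1)) ((2⁻¹:ℝ)^i)) (Ioc ((2⁻¹:ℝ)^(j+1)) ((2⁻¹:ℝ)^j)) := by
      intro i j hij
      apply Set.disjoint_left.mpr
      rintro r ⟨hr1, _⟩ ⟨_, hr4⟩
      have : (2⁻¹:ℝ)^j ≤ (2⁻¹:ℝ)^(i+1) :=
        pow_le_pow_of_le_one (by norm_num) (by norm_num) hij
      linarith
    intro i j hij
    rcases hij.lt_or_gt with h | h
    · exact (key i j h).preimage _
    · exact ((key j i h).symm).preimage _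
  calc ∫⁻ x in {x : Fin n → ℝ | rho l x ≤ 1}, f x
      = ∫⁻ x in rho l ⁻¹' Ioc 0 1, f x := setLIntegral_congr hae
    _ = ∫⁻ x in ⋃ j : ℕ, rho l ⁻¹' Ioc ((2⁻¹:ℝ)^(j+1)) ((2⁻¹:ℝ)^j), f x := by
        rw [← preimage_iUnion, hUn]
    _ = ∑' j : ℕ, ∫⁻ x in rho l ⁻¹' Ioc ((2⁻¹:ℝ)^(j+1)) ((2⁻¹:ℝ)^j), f x :=
        lintegral_iUnion (fun j => (continuous_rho l).measurable measurableSet_Ioc) hdisj f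

lemma pow_rpow_comm {x : ℝ} (hx : 0 ≤ x) (m : ℕ) (r : ℝ) : (x ^ m) ^ r = (x ^ r) ^ m := by
  rw [← Real.rpow_natCast x m, ← Real.rpow_mul hx, mul_comm, Real.rpow_mul hx,
    Real.rpow_natCast]


lemma meas_f (l : Fin n → ℕ) (s : ℝ) :
    Measurable fun x : Fin n → ℝ => ENNReal.ofReal (rho l x ^ s) :=
  ENNReal.measurable_ofReal.comp
    ((by fun_prop : Measurable fun r : ℝ => r ^ s).comp (continuous_rho l).measurable)

lemma lint_lt_top (hn : 0 < n) (hl : ∀ k, 0 < l k) {s : ℝ} (hs : -gnorm l < s) :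
    ∫⁻ x in {x : Fin n → ℝ | rho l x ≤ 1}, ENNReal.ofReal (rho l x ^ s) < ⊤ := by
  rcases le_or_gt 0 s with h0 | h0
  · calc ∫⁻ x in {x : Fin n → ℝ | rho l x ≤ 1}, ENNReal.ofReal (rho l x ^ s)
        ≤ ∫⁻ _ in {x : Fin n → ℝ | rho l x ≤ 1}, (1:ℝ≥0∞) := by
          refine setLIntegral_mono measurable_const fun x hx => ?_
          rw [← ENNReal.ofReal_one]
          exact ENNReal.ofReal_le_ofReal (Real.rpow_le_one (rho_nonneg l x) hx h0)
      _ = 1 * volume {x : Fin n → ℝ | rho l x ≤ 1} := setLIntegral_const _ _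
      _ < ⊤ := by rw [one_mul]; exact c_lt_top hn hl
  · set c := volume {x : Fin n → ℝ | rho l x ≤ 1} with hc
    set q : ℝ≥0∞ := ENNReal.ofReal ((2⁻¹:ℝ) ^ (s + gnorm l)) with hq
    have hq1 : q < 1 := by
      rw [hq]
      exact ENNReal.ofReal_lt_one.mpr
        (Real.rpow_lt_one (by norm_num) (by norm_num) (by linarith))
    rw [lint_decomp hn hl]
    have key : ∀ j : ℕ,
        (∫⁻ x in rho l ⁻¹' Ioc ((2⁻¹:ℝ)^(j+1)) ((2⁻¹:ℝ)^j), ENNReal.ofReal (rho l x ^ s))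
          ≤ (ENNReal.ofReal ((2⁻¹:ℝ) ^ s) * c) * q ^ j := by
      intro j
      have haj : (0:ℝ) < (2⁻¹:ℝ)^j := by positivity
      calc (∫⁻ x in rho l ⁻¹' Ioc ((2⁻¹:ℝ)^(j+1)) ((2⁻¹:ℝ)^j), ENNReal.ofReal (rho l x ^ s))
          ≤ ∫⁻ _ in rho l ⁻¹' Ioc ((2⁻¹:ℝ)^(j+1)) ((2⁻¹:ℝ)^j),
              ENNReal.ofReal (((2⁻¹:ℝ)^(j+1)) ^ s) := by
            refine setLIntegral_mono measurable_const fun x hx => ?_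
            exact ENNReal.ofReal_le_ofReal
              (Real.rpow_le_rpow_of_nonpos (by positivity) hx.1.le h0.le)
        _ = ENNReal.ofReal (((2⁻¹:ℝ)^(j+1)) ^ s)
              * volume (rho l ⁻¹' Ioc ((2⁻¹:ℝ)^(j+1)) ((2⁻¹:ℝ)^j)) := setLIntegral_const _ _
        _ ≤ ENNReal.ofReal (((2⁻¹:ℝ)^(j+1)) ^ s) * volume {x : Fin n → ℝ | rho l x ≤ (2⁻¹:ℝ)^j} := by
            exact mul_le_mul_right (measure_mono fun x hx => hx.2) _
        _ = ENNReal.ofReal (((2⁻¹:ℝ)^(j+1)) ^ s)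
              * (ENNReal.ofReal (((2⁻¹:ℝ)^j) ^ gnorm l) * c) := by
            rw [measure_rho_le hn hl haj]
        _ = (ENNReal.ofReal ((2⁻¹:ℝ) ^ s) * c) * q ^ j := by
            have hre : (((2⁻¹:ℝ)^(j+1))^s) * (((2⁻¹:ℝ)^j)^(gnorm l))
                = (2⁻¹:ℝ)^s * (((2⁻¹:ℝ)^(s+gnorm l))^j) := by
              rw [pow_succ, Real.mul_rpow haj.le (by norm_num),
                pow_rpow_comm (by norm_num) j s, pow_rpow_comm (by norm_num) j (gnorm l),
                Real.rpow_add (by norm_num : (0:ℝ) < 2⁻¹), mul_pow]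
              ring
            rw [← mul_assoc,
              ← ENNReal.ofReal_mul (Real.rpow_nonneg (by positivity) _), hre,
              ENNReal.ofReal_mul (Real.rpow_nonneg (by norm_num) _),
              ENNReal.ofReal_pow (Real.rpow_nonneg (by norm_num) _)]
            ring
    calc (∑' j : ℕ, ∫⁻ x in rho l ⁻¹' Ioc ((2⁻¹:ℝ)^(j+1)) ((2⁻¹:ℝ)^j),
            ENNReal.ofReal (rho l x ^ s))
        ≤ ∑' j : ℕ, (ENNReal.ofReal ((2⁻¹:ℝ) ^ s) * c) * q ^ j := ENNReal.tsum_le_tsum key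
      _ = (ENNReal.ofReal ((2⁻¹:ℝ) ^ s) * c) * ∑' j : ℕ, q ^ j := ENNReal.tsum_mul_left
      _ = (ENNReal.ofReal ((2⁻¹:ℝ) ^ s) * c) * (1 - q)⁻¹ := by rw [ENNReal.tsum_geometric]
      _ < ⊤ := by
          refine ENNReal.mul_lt_top (ENNReal.mul_lt_top ENNReal.ofReal_lt_top (c_lt_top hn hl)) ?_
          exact ENNReal.inv_lt_top.mpr (tsub_pos_of_lt hq1)

lemma lint_eq_top (hn : 0 < n) (hl : ∀ k, 0 < l k) {s : ℝ} (hs : s ≤ -gnorm l) :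
    ∫⁻ x in {x : Fin n → ℝ | rho l x ≤ 1}, ENNReal.ofReal (rho l x ^ s) = ⊤ := by
  have hg : 0 < gnorm l := gnorm_pos hn hl
  have hs0 : s ≤ 0 := by linarith
  set c := volume {x : Fin n → ℝ | rho l x ≤ 1} with hc
  have hctop : c ≠ ⊤ := (c_lt_top hn hl).ne
  have hδ : 0 < 1 - (2⁻¹:ℝ) ^ gnorm l := by
    have : (2⁻¹:ℝ) ^ gnorm l < 1 := Real.rpow_lt_one (by norm_num) (by norm_num) hg
    linarith
  set K : ℝ≥0∞ := ENNReal.ofReal (1 - (2⁻¹:ℝ) ^ gnorm l) * c with hK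
  have hK0 : K ≠ 0 :=
    mul_ne_zero (ENNReal.ofReal_pos.mpr hδ).ne' (c_pos hn hl).ne'
  rw [lint_decomp hn hl]
  refine eq_top_iff.mpr ?_
  calc (⊤:ℝ≥0∞) = ∑' _ : ℕ, K := (ENNReal.tsum_const_eq_top_of_ne_zero hK0).symm
    _ ≤ ∑' j : ℕ, ∫⁻ x in rho l ⁻¹' Ioc ((2⁻¹:ℝ)^(j+1)) ((2⁻¹:ℝ)^j),
          ENNReal.ofReal (rho l x ^ s) := by
        refine ENNReal.tsum_le_tsum fun j => ?_
        have haj : (0:ℝ) < (2⁻¹:ℝ)^j := by positivity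
        have haj1 : ((2⁻¹:ℝ)^j) ≤ 1 := pow_le_one₀ (by norm_num) (by norm_num)
        have hμ : volume (rho l ⁻¹' Ioc ((2⁻¹:ℝ)^(j+1)) ((2⁻¹:ℝ)^j))
            = ENNReal.ofReal (((2⁻¹:ℝ)^j) ^ gnorm l * (1 - (2⁻¹:ℝ) ^ gnorm l)) * c := by
          have hset : rho l ⁻¹' Ioc ((2⁻¹:ℝ)^(j+1)) ((2⁻¹:ℝ)^j)
              = {x : Fin n → ℝ | rho l x ≤ (2⁻¹:ℝ)^j}
                \ {x : Fin n → ℝ | rho l x ≤ (2⁻¹:ℝ)^(j+1)} := by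
            ext x
            simp only [mem_preimage, mem_Ioc, mem_diff, mem_setOf_eq, not_le]
            tauto
          have hsub2 : {x : Fin n → ℝ | rho l x ≤ (2⁻¹:ℝ)^(j+1)}
              ⊆ {x : Fin n → ℝ | rho l x ≤ (2⁻¹:ℝ)^j} := by
            intro x hx
            simp only [mem_setOf_eq] at hx ⊢
            exact le_trans hx
              (pow_le_pow_of_le_one (by norm_num) (by norm_num) (Nat.le_succ j))
          rw [hset, measure_diff hsub2 (measurableSet_rho_le l _).nullMeasurableSet
            (by rw [measure_rho_le hn hl (by positivity : (0:ℝ) < (2⁻¹:ℝ)^(j+1))]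
                exact (ENNReal.mul_lt_top ENNReal.ofReal_lt_top (c_lt_top hn hl)).ne),
            measure_rho_le hn hl haj, measure_rho_le hn hl (by positivity : (0:ℝ) < (2⁻¹:ℝ)^(j+1)),
            ← ENNReal.sub_mul (fun _ _ => hctop), ← ENNReal.ofReal_sub _ (by positivity)]
          congr 2
          rw [pow_succ, Real.mul_rpow haj.le (by norm_num)]
          ring
        have hpt : K ≤ ENNReal.ofReal (((2⁻¹:ℝ)^j) ^ s)
            * volume (rho l ⁻¹' Ioc ((2⁻¹:ℝ)^(j+1)) ((2⁻¹:ℝ)^j)) := by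
          rw [hμ, ← mul_assoc, hK]
          refine mul_le_mul_left ?_ c
          rw [← ENNReal.ofReal_mul (by positivity)]
          refine ENNReal.ofReal_le_ofReal ?_
          rw [← mul_assoc, ← Real.rpow_add haj]
          have h1 : (1:ℝ) ≤ ((2⁻¹:ℝ)^j) ^ (s + gnorm l) :=
            Real.one_le_rpow_of_pos_of_le_one_of_nonpos haj haj1 (by linarith)
          nlinarith
        refine le_trans hpt ?_
        rw [← setLIntegral_const]
        refine setLIntegral_mono (meas_f l s) fun x hx => ?_
        exact ENNReal.ofReal_le_ofReal
          (Real.rpow_le_rpow_of_nonpos (lt_trans (by positivity) hx.1) hx.2 hs0)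

lemma integrableOn_iff_lint (l : Fin n → ℕ) (s : ℝ) (S : Set (Fin n → ℝ)) :
    IntegrableOn (fun x => rho l x ^ s) S volume
      ↔ ∫⁻ x in S, ENNReal.ofReal (rho l x ^ s) < ⊤ := by
  have hmeas : AEStronglyMeasurable (fun x : Fin n → ℝ => rho l x ^ s) (volume.restrict S) :=
    (((by fun_prop : Measurable fun r : ℝ => r ^ s).comp
      (continuous_rho l).measurable).aestronglyMeasurable)
  have hnn : 0 ≤ᵐ[volume.restrict S] fun x : Fin n → ℝ => rho l x ^ s :=
    Filter.Eventually.of_forall fun x => Real.rpow_nonneg (rho_nonneg l x) s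
  constructor
  · intro h
    exact (hasFiniteIntegral_iff_ofReal hnn).mp h.2
  · intro h
    exact ⟨hmeas, (hasFiniteIntegral_iff_ofReal hnn).mpr h⟩


end Aux

/-- Lemma 2.1(b): `∫_{ρ≤1} ρ^s dx` is finite iff `s > -‖γ‖`, and then the scaling
identity `∫_{ρ≤t} ρ^s = t^{s+‖γ‖} ∫_{ρ≤1} ρ^s` holds for all `t > 0`. -/
theorem stmt1 (n : ℕ) (hn : 0 < n) (l : Fin n → ℕ) (hl : ∀ k, 0 < l k) (s : ℝ) :
    (IntegrableOn (fun x : Fin n → ℝ => rho l x ^ s) {x | rho l x ≤ 1} volume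
      ↔ -gnorm l < s)
    ∧ (-gnorm l < s → ∀ t : ℝ, 0 < t →
        ∫ x in {x : Fin n → ℝ | rho l x ≤ t}, rho l x ^ s
          = t ^ (s + gnorm l) * ∫ x in {x : Fin n → ℝ | rho l x ≤ 1}, rho l x ^ s) := by
  refine ⟨⟨fun h => ?_, fun h => ?_⟩, fun _ t ht => scaling hn hl s ht⟩
  · by_contra hns
    push_neg at hns
    have h2 := (integrableOn_iff_lint l s _).mp h
    rw [lint_eq_top hn hl hns] at h2
    exact absurd h2 (lt_irrefl ⊤)
  · exact (integrableOn_iff_lint l s _).mpr (lint_lt_top hn hl h)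



end Semielliptic
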